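/- Let c > 0, a ≤ c, b ≤ c and ab ≤ 0. Then the function x ↦ F(a,b;c;x) is decreasing on (0,1). Similarly, if instead ab ≥ 0 (with c > 0, a ≤ c, b ≤ c), then x ↦ F(a,b;c;x) is increasing on (0,1). -/

import Mathlib

open Filter Topology

noncomputable def gaussHF (a b c x : ℝ) : ℝ :=
  ∑' n : ℕ, ((ascPochhammer ℝ n).eval a * (ascPochhammer ℝ n).eval b /
    ((ascPochhammer ℝ n).eval c * n.factorial)) * x ^ n

noncomputable def K (a b c : ℝ) (n : ℕ) : ℝ :=
  (ascPochhammer ℝ n).eval a * (ascPochhammer ℝ n).eval b /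
    ((ascPochhammer ℝ n).eval c * n.factorial)

noncomputable def F (a b c x : ℝ) : ℝ := ∑' n : ℕ, K a b c n * x ^ n

lemma poch_succ (a : ℝ) (n : ℕ) :
    (ascPochhammer ℝ (n+1)).eval a = (ascPochhammer ℝ n).eval a * (a + n) := by
  simp [ascPochhammer_succ_right]

lemma poch_succ_left (a : ℝ) (n : ℕ) :
    (ascPochhammer ℝ (n+1)).eval a = a * (ascPochhammer ℝ n).eval (a+1) := by
  simp [ascPochhammer_succ_left, Polynomial.eval_comp]

lemma poch_pos {c : ℝ} (hc : 0 < c) (n : ℕ) : 0 < (ascPochhammer ℝ n).eval c := by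
  induction n with
  | zero => simp
  | succ n ih => rw [poch_succ]; positivity

lemma poch_nonneg {a : ℝ} (ha : 0 ≤ a) (n : ℕ) : 0 ≤ (ascPochhammer ℝ n).eval a := by
  induction n with
  | zero => simp
  | succ n ih => rw [poch_succ]; positivity

lemma K_zero (a b c : ℝ) : K a b c 0 = 1 := by simp [K]

lemma K_succ {a b c : ℝ} (hc : 0 < c) (n : ℕ) :
    K a b c (n+1) = K a b c n * ((a+n) * (b+n) / ((c+n) * (n+1))) := by
  have h1 := poch_pos hc n
  have h2 : (0:ℝ) < c + n := by positivity
  have h3 : (n.factorial : ℝ) ≠ 0 := Nat.cast_ne_zero.2 n.factorial_ne_zero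
  simp only [K, poch_succ, Nat.factorial_succ, Nat.cast_mul, Nat.cast_add, Nat.cast_one]
  field_simp

lemma poch_zero_mono {a : ℝ} {m n : ℕ} (h : (ascPochhammer ℝ m).eval a = 0) (hmn : m ≤ n) :
    (ascPochhammer ℝ n).eval a = 0 := by
  induction n, hmn using Nat.le_induction with
  | base => exact h
  | succ n hn ih => rw [poch_succ, ih, zero_mul]

lemma tendsto_ratio (u v : ℝ) (hv : 0 < v) :
    Tendsto (fun n : ℕ => (u + n) / (v + n)) atTop (𝓝 1) := by
  have h1 : Tendsto (fun n : ℕ => u / n + 1) atTop (𝓝 1) := by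
    simpa using (tendsto_const_div_atTop_nhds_zero_nat u).add tendsto_const_nhds
  have h2 : Tendsto (fun n : ℕ => v / n + 1) atTop (𝓝 1) := by
    simpa using (tendsto_const_div_atTop_nhds_zero_nat v).add tendsto_const_nhds
  have h3 := h1.div h2 one_ne_zero
  rw [div_one] at h3
  refine h3.congr' ?_
  filter_upwards [eventually_gt_atTop 0] with n hn
  have hn' : (n:ℝ) ≠ 0 := Nat.cast_ne_zero.2 hn.ne'
  have hvn : v + (n:ℝ) ≠ 0 := by positivity
  rw [Pi.div_apply]
  field_simp

lemma summable_abs_K {a b c : ℝ} (hc : 0 < c) {x : ℝ} (hx : |x| < 1) :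
    Summable (fun n => |K a b c n * x ^ n|) := by
  by_cases hz : ∃ m, K a b c m * x ^ m = 0
  · obtain ⟨m, hm⟩ := hz
    have hzero : ∀ n, m ≤ n → K a b c n * x ^ n = 0 := by
      intro n hmn
      rcases mul_eq_zero.1 hm with hK | hxp
      · have hden : ((ascPochhammer ℝ m).eval c * (m.factorial:ℝ)) ≠ 0 := by
          have h1 := poch_pos hc m
          have h2 : (0:ℝ) < m.factorial := Nat.cast_pos.2 m.factorial_pos
          positivity
        have : (ascPochhammer ℝ m).eval a * (ascPochhammer ℝ m).eval b = 0 :=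
          (div_eq_zero_iff.1 hK).resolve_right hden
        rcases mul_eq_zero.1 this with h | h
        · rw [K, poch_zero_mono h hmn]; simp
        · rw [K, poch_zero_mono h hmn]; simp
      · obtain ⟨hx0, hm0⟩ := pow_eq_zero_iff'.1 hxp
        have : n ≠ 0 := by omega
        rw [hx0, zero_pow this, mul_zero]
    apply (summable_nat_add_iff m).1
    refine summable_zero.congr fun n => ?_
    rw [hzero (n + m) (Nat.le_add_left m n), abs_zero]
  · push_neg at hz
    refine summable_of_ratio_test_tendsto_lt_one hx ?_ ?_
    · exact Eventually.of_forall fun n => by simpa [abs_eq_zero] using hz n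
    · have key : ∀ n : ℕ, ‖|K a b c (n+1) * x ^ (n+1)|‖ / ‖|K a b c n * x ^ n|‖ =
          |(a+n)/(1+n)| * |(b+n)/(c+n)| * |x| := by
        intro n
        have h0 : K a b c n * x ^ n ≠ 0 := hz n
        have hstep : K a b c (n+1) * x ^ (n+1) =
            (K a b c n * x ^ n) * (((a+n)/(1+n)) * ((b+n)/(c+n)) * x) := by
          rw [K_succ hc n, pow_succ]
          have hcn : c + (n:ℝ) ≠ 0 := by positivity
          have hn1 : (1:ℝ) + n ≠ 0 := by positivity
          field_simp
          ring
        rw [hstep, Real.norm_eq_abs, Real.norm_eq_abs, abs_abs, abs_abs, abs_mul,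
          mul_comm (|K a b c n * x ^ n|), mul_div_assoc]
        rw [div_self (abs_ne_zero.2 h0), mul_one, abs_mul, abs_mul]
      simp only [key]
      have h1 := (tendsto_ratio a 1 one_pos).abs
      have h2 := (tendsto_ratio b c hc).abs
      simpa using (h1.mul h2).mul (tendsto_const_nhds (x := |x|))

lemma summable_K {a b c : ℝ} (hc : 0 < c) {x : ℝ} (hx : |x| < 1) :
    Summable (fun n => K a b c n * x ^ n) := (summable_abs_K hc hx).of_abs

lemma poch_shift {c : ℝ} (hc : 0 < c) (n : ℕ) :
    (ascPochhammer ℝ n).eval (c+1) = (ascPochhammer ℝ n).eval c * (c + n) / c := by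
  have h1 : c * (ascPochhammer ℝ n).eval (c+1) = (ascPochhammer ℝ n).eval c * (c + n) := by
    rw [← poch_succ_left, poch_succ]
  field_simp [hc.ne']
  linarith [h1]

lemma coeff_id {a b c : ℝ} (hc : 0 < c) (n : ℕ) :
    K a b c (n+1) - K (a+1) b c (n+1)
      = -K (a+1) b c n + (c-b)/c * K (a+1) b (c+1) n := by
  have hpc := poch_pos hc n
  have hcn : (0:ℝ) < c + n := by positivity
  have hf : (n.factorial : ℝ) ≠ 0 := Nat.cast_ne_zero.2 n.factorial_ne_zero
  have hn1 : ((n:ℝ) + 1) ≠ 0 := by positivity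
  simp only [K, poch_succ_left a n, poch_succ b n, poch_succ (a+1) n, poch_succ c n,
    poch_shift hc n, Nat.factorial_succ, Nat.cast_mul, Nat.cast_add, Nat.cast_one]
  field_simp
  ring

lemma deriv_coeff_id {a b c : ℝ} (hc : 0 < c) (n : ℕ) :
    ((n:ℝ)+1) * K a b c (n+1) = (a*b/c) * K (a+1) (b+1) (c+1) n := by
  have hpc := poch_pos hc n
  have hpc1 := poch_pos (by linarith : (0:ℝ) < c + 1) n
  have hf : (n.factorial : ℝ) ≠ 0 := Nat.cast_ne_zero.2 n.factorial_ne_zero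
  have hn1 : ((n:ℝ) + 1) ≠ 0 := by positivity
  simp only [K, poch_succ_left a n, poch_succ_left b n, poch_succ_left c n,
    Nat.factorial_succ, Nat.cast_mul, Nat.cast_add, Nat.cast_one]
  field_simp

lemma identA {a b c x : ℝ} (hc : 0 < c) (hx : |x| < 1) :
    F a b c x = (1-x) * F (a+1) b c x + ((c-b)*x/c) * F (a+1) b (c+1) x := by
  have s0 := summable_K (a := a) (b := b) hc hx
  have s1 := summable_K (a := a+1) (b := b) hc hx
  have s2 := summable_K (a := a+1) (b := b) (by linarith : (0:ℝ) < c+1) hx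
  have sdiff : Summable (fun n => (K a b c n - K (a+1) b c n) * x ^ n) := by
    refine (s0.sub s1).congr fun n => ?_; ring
  have key : ∑' n : ℕ, (K a b c n - K (a+1) b c n) * x ^ n
      = (-x) * F (a+1) b c x + ((c-b)/c * x) * F (a+1) b (c+1) x := by
    rw [Summable.tsum_eq_zero_add sdiff]
    have h0 : (K a b c 0 - K (a+1) b c 0) * x ^ 0 = 0 := by
      rw [K_zero, K_zero]; ring
    rw [h0, zero_add]
    have hterm : ∀ n : ℕ, (K a b c (n+1) - K (a+1) b c (n+1)) * x ^ (n+1)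
        = (-x) * (K (a+1) b c n * x ^ n) + ((c-b)/c * x) * (K (a+1) b (c+1) n * x ^ n) := by
      intro n
      rw [coeff_id hc n, pow_succ]
      ring
    rw [tsum_congr hterm, Summable.tsum_add ((s1.mul_left _)) ((s2.mul_left _)),
      tsum_mul_left, tsum_mul_left]
    rfl
  have split : F a b c x = ∑' n : ℕ, (K a b c n - K (a+1) b c n) * x ^ n + F (a+1) b c x := by
    rw [F, F, ← Summable.tsum_add sdiff s1]
    exact tsum_congr fun n => by ring
  rw [split, key]
  ring

lemma F_symm (a b c x : ℝ) : F a b c x = F b a c x := by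
  refine tsum_congr fun n => ?_
  simp only [K]; ring_nf

lemma identB {a b c x : ℝ} (hc : 0 < c) (hx : |x| < 1) :
    F a b c x = (1-x) * F a (b+1) c x + ((c-a)*x/c) * F a (b+1) (c+1) x := by
  rw [F_symm a b c x, identA hc hx, F_symm (b+1) a c x, F_symm (b+1) a (c+1) x]

lemma F_nonneg_base {a b c x : ℝ} (ha : 0 ≤ a) (hb : 0 ≤ b) (hc : 0 < c) (hx : 0 ≤ x) :
    0 ≤ F a b c x := by
  refine tsum_nonneg fun n => ?_
  have h1 := poch_nonneg ha n
  have h2 := poch_nonneg hb n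
  have h3 := poch_pos hc n
  have h4 : (0:ℝ) < n.factorial := Nat.cast_pos.2 n.factorial_pos
  have : 0 ≤ K a b c n := by unfold K; positivity
  positivity

lemma F_nonneg_B (m : ℕ) : ∀ a b c x : ℝ, 0 ≤ a → a ≤ c → b ≤ c → -(m:ℝ) ≤ b → 1 ≤ c →
    0 ≤ x → x < 1 → 0 ≤ F a b c x := by
  induction m with
  | zero =>
    intro a b c x ha hac hbc hbm hc hx hx1
    exact F_nonneg_base ha (by simpa using hbm) (by linarith) hx
  | succ m ih =>
    intro a b c x ha hac hbc hbm hc hx hx1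
    by_cases hb : 0 ≤ b
    · exact F_nonneg_base ha hb (by linarith) hx
    · push_neg at hb
      have hc0 : (0:ℝ) < c := by linarith
      have hax : |x| < 1 := abs_lt.2 ⟨by linarith, hx1⟩
      rw [identB hc0 hax]
      have H1 : 0 ≤ F a (b+1) c x := by
        refine ih a (b+1) c x ha hac (by linarith) (by push_cast at hbm ⊢; linarith) hc hx hx1
      have H2 : 0 ≤ F a (b+1) (c+1) x := by
        refine ih a (b+1) (c+1) x ha (by linarith) (by linarith) (by push_cast at hbm ⊢; linarith)
          (by linarith) hx hx1
      have hca : 0 ≤ (c-a)*x/c := by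
        have : 0 ≤ c - a := by linarith
        positivity
      nlinarith

lemma F_nonneg_A (m : ℕ) : ∀ a b c x : ℝ, a ≤ c → b ≤ c → -(m:ℝ) ≤ a → 1 ≤ c →
    0 ≤ x → x < 1 → 0 ≤ F a b c x := by
  induction m with
  | zero =>
    intro a b c x hac hbc ham hc hx hx1
    exact F_nonneg_B ⌈-b⌉₊ a b c x (by simpa using ham) hac hbc
      (by simpa using neg_le_neg (Nat.le_ceil (-b))) hc hx hx1
  | succ m ih =>
    intro a b c x hac hbc ham hc hx hx1
    by_cases ha : 0 ≤ a
    · exact F_nonneg_B ⌈-b⌉₊ a b c x ha hac hbc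
        (by simpa using neg_le_neg (Nat.le_ceil (-b))) hc hx hx1
    · push_neg at ha
      have hc0 : (0:ℝ) < c := by linarith
      have hax : |x| < 1 := abs_lt.2 ⟨by linarith, hx1⟩
      rw [identA hc0 hax]
      have H1 : 0 ≤ F (a+1) b c x :=
        ih (a+1) b c x (by linarith) hbc (by push_cast at ham ⊢; linarith) hc hx hx1
      have H2 : 0 ≤ F (a+1) b (c+1) x :=
        ih (a+1) b (c+1) x (by linarith) (by linarith) (by push_cast at ham ⊢; linarith)
          (by linarith) hx hx1
      have hcb : 0 ≤ (c-b)*x/c := by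
        have : 0 ≤ c - b := by linarith
        positivity
      nlinarith

lemma F_nonneg {a b c x : ℝ} (hac : a ≤ c) (hbc : b ≤ c) (hc : 1 ≤ c)
    (hx : 0 ≤ x) (hx1 : x < 1) : 0 ≤ F a b c x :=
  F_nonneg_A ⌈-a⌉₊ a b c x hac hbc
    (by simpa using neg_le_neg (Nat.le_ceil (-a))) hc hx hx1

lemma hasDerivAt_F {a b c : ℝ} (hc : 0 < c) {x : ℝ} (hx : |x| < 1) :
    HasDerivAt (fun y => F a b c y) ((a*b/c) * F (a+1) (b+1) (c+1) x) x := by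
  set r : ℝ := (|x| + 1) / 2 with hr
  have hxr : |x| < r := by rw [hr]; linarith [abs_nonneg x]
  have hr1 : r < 1 := by rw [hr]; linarith [abs_nonneg x]
  have hr0 : 0 ≤ r := by positivity
  have hrabs : |r| < 1 := by rw [abs_of_nonneg hr0]; exact hr1
  have hc1 : (0:ℝ) < c + 1 := by linarith
  set u : ℕ → ℝ := fun n => (n:ℝ) * |K a b c n| * r ^ (n-1) with hu
  have hkey : ∀ n : ℕ, u (n+1) = |a*b/c| * |K (a+1) (b+1) (c+1) n * r ^ n| := by
    intro n
    have h1 : |((n:ℝ)+1) * K a b c (n+1)| = |a*b/c * K (a+1) (b+1) (c+1) n| := by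
      rw [deriv_coeff_id hc n]
    rw [abs_mul, abs_mul, abs_of_nonneg (by positivity : (0:ℝ) ≤ (n:ℝ)+1)] at h1
    have hrp : |r ^ n| = r ^ n := abs_of_nonneg (by positivity)
    simp only [hu, abs_mul, hrp, Nat.add_sub_cancel, Nat.cast_add, Nat.cast_one]
    rw [← mul_assoc, h1]
  have hu_s : Summable u := by
    rw [← summable_nat_add_iff 1]
    exact (((summable_abs_K (a := a+1) (b := b+1) hc1 hrabs).mul_left |a*b/c|).congr
      fun n => (hkey n).symm)
  set t : Set ℝ := Set.Ioo (-r) r with ht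
  have hbound : ∀ (n : ℕ) (y : ℝ), y ∈ t → ‖K a b c n * ((n:ℝ) * y ^ (n-1))‖ ≤ u n := by
    intro n y hy
    have hyr : |y| ≤ r := le_of_lt (abs_lt.2 ⟨hy.1, hy.2⟩)
    rw [Real.norm_eq_abs, abs_mul, abs_mul, abs_of_nonneg (Nat.cast_nonneg n : (0:ℝ) ≤ n),
      abs_pow]
    calc |K a b c n| * ((n:ℝ) * |y| ^ (n-1)) ≤ |K a b c n| * ((n:ℝ) * r ^ (n-1)) := by
          have := pow_le_pow_left₀ (abs_nonneg y) hyr (n-1)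
          have h2 : (n:ℝ) * |y| ^ (n-1) ≤ (n:ℝ) * r ^ (n-1) := by
            apply mul_le_mul_of_nonneg_left this (Nat.cast_nonneg n)
          exact mul_le_mul_of_nonneg_left h2 (abs_nonneg _)
      _ = u n := by rw [hu]; ring
  have hmem : x ∈ t := Set.mem_Ioo.2 ⟨(abs_lt.1 hxr).1, (abs_lt.1 hxr).2⟩
  have hder := hasDerivAt_tsum_of_isPreconnected hu_s isOpen_Ioo
    (convex_Ioo (-r) r).isPreconnected
    (fun n y _ => (hasDerivAt_pow n y).const_mul (K a b c n)) hbound hmem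
    (summable_K hc hx) hmem
  have hsum' : Summable (fun n => K a b c n * ((n:ℝ) * x ^ (n-1))) :=
    Summable.of_norm_bounded hu_s (fun n => hbound n x hmem)
  have htsum : ∑' n : ℕ, K a b c n * ((n:ℝ) * x ^ (n-1))
      = (a*b/c) * F (a+1) (b+1) (c+1) x := by
    rw [Summable.tsum_eq_zero_add hsum']
    simp only [Nat.cast_zero, zero_mul, mul_zero, zero_add]
    have : ∀ n : ℕ, K a b c (n+1) * (((n:ℕ)+1 : ℕ) * x ^ ((n+1)-1))
        = (a*b/c) * (K (a+1) (b+1) (c+1) n * x ^ n) := by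
      intro n
      have := deriv_coeff_id (a := a) (b := b) hc n
      push_cast
      linear_combination x ^ n * this
    rw [tsum_congr this, tsum_mul_left, F]
  rw [← htsum]
  exact hder

theorem stmt_2 (a b c : ℝ) (hc : 0 < c) (ha : a ≤ c) (hb : b ≤ c) :
    (a * b ≤ 0 → AntitoneOn (fun x => gaussHF a b c x) (Set.Ioo 0 1)) ∧
    (0 ≤ a * b → MonotoneOn (fun x => gaussHF a b c x) (Set.Ioo 0 1)) := by
  have hgF : (fun x => gaussHF a b c x) = fun x => F a b c x := rfl
  have hder : ∀ x ∈ Set.Ioo (0:ℝ) 1, HasDerivAt (fun y => F a b c y)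
      ((a*b/c) * F (a+1) (b+1) (c+1) x) x := fun x hx =>
    hasDerivAt_F hc (abs_lt.2 ⟨by linarith [hx.1], hx.2⟩)
  have hcont : ContinuousOn (fun x => F a b c x) (Set.Ioo 0 1) :=
    fun x hx => ((hder x hx).continuousAt).continuousWithinAt
  have hdiff : DifferentiableOn ℝ (fun x => F a b c x) (interior (Set.Ioo (0:ℝ) 1)) := by
    rw [isOpen_Ioo.interior_eq]
    exact fun x hx => ((hder x hx).differentiableAt).differentiableWithinAt
  have hFnn : ∀ x ∈ Set.Ioo (0:ℝ) 1, 0 ≤ F (a+1) (b+1) (c+1) x := fun x hx =>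
    F_nonneg (by linarith) (by linarith) (by linarith) (le_of_lt hx.1) hx.2
  constructor
  · intro hab
    rw [hgF]
    refine antitoneOn_of_deriv_nonpos (convex_Ioo 0 1) hcont hdiff ?_
    rw [isOpen_Ioo.interior_eq]
    intro x hx
    rw [(hder x hx).deriv]
    have h1 : a*b/c ≤ 0 := div_nonpos_of_nonpos_of_nonneg hab hc.le
    have h2 := hFnn x hx
    nlinarith
  · intro hab
    rw [hgF]
    refine monotoneOn_of_deriv_nonneg (convex_Ioo 0 1) hcont hdiff ?_
    rw [isOpen_Ioo.interior_eq]
    intro x hx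
    rw [(hder x hx).deriv]
    have h1 : 0 ≤ a*b/c := div_nonneg hab hc.le
    exact mul_nonneg h1 (hFnn x hx)
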